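/- For all 0<q<1, the sequence of offsets is strictly decreasing from n=2 onward: b_n(q) > b_{n+1}(q) for every integer n≥2. -/

import Mathlib

/-- Partial product of the Euler function: `λ_k(q) = ∏_{i=1}^k (1 - q^i)`, with `λ_0(q) = 1`. -/
noncomputable def eulerLam (q : ℝ) (k : ℕ) : ℝ := ∏ i ∈ Finset.range k, (1 - q ^ (i + 1))

/-- The Euler function `κ(q) = ∏_{i=1}^∞ (1 - q^i)`. -/
noncomputable def eulerKappa (q : ℝ) : ℝ := ∏' i : ℕ, (1 - q ^ (i + 1))

/-- The tail product `μ_n(q) = ∏_{i=n}^∞ (1 - q^i)`. -/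
noncomputable def eulerMu (q : ℝ) (n : ℕ) : ℝ := ∏' i : ℕ, (1 - q ^ (n + i))

/-- The offset `b_n(q) = Σ_{k=1}^n λ_{k-1}(q) λ_{n-k}(q) - n κ(q)²`, the expected number of
posts in a random graph order on `n` elements minus `n κ(q)²`. -/
noncomputable def postOffset (q : ℝ) (n : ℕ) : ℝ :=
  (∑ k ∈ Finset.Icc 1 n, eulerLam q (k - 1) * eulerLam q (n - k)) - n * eulerKappa q ^ 2

section aux

variable {q : ℝ}

lemma eulerLam_succ (q : ℝ) (k : ℕ) :
    eulerLam q (k + 1) = eulerLam q k * (1 - q ^ (k + 1)) :=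
  Finset.prod_range_succ _ _

lemma factor_pos (hq0 : 0 < q) (hq1 : q < 1) (i : ℕ) : 0 < 1 - q ^ (i + 1) := by
  have : q ^ (i + 1) < 1 := pow_lt_one₀ hq0.le hq1 (Nat.succ_ne_zero i)
  linarith

lemma factor_le_one (hq0 : 0 < q) (i : ℕ) : 1 - q ^ (i + 1) ≤ 1 := by
  have : 0 < q ^ (i + 1) := pow_pos hq0 _
  linarith

lemma eulerLam_pos (hq0 : 0 < q) (hq1 : q < 1) (k : ℕ) : 0 < eulerLam q k :=
  Finset.prod_pos fun i _ => factor_pos hq0 hq1 i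

lemma eulerLam_le_one (hq0 : 0 < q) (hq1 : q < 1) (k : ℕ) : eulerLam q k ≤ 1 :=
  Finset.prod_le_one (fun i _ => (factor_pos hq0 hq1 i).le) (fun i _ => factor_le_one hq0 i)

lemma eulerLam_anti (hq0 : 0 < q) (hq1 : q < 1) {k m : ℕ} (h : k ≤ m) :
    eulerLam q m ≤ eulerLam q k := by
  induction m, h using Nat.le_induction with
  | base => exact le_rfl
  | succ m hkm ih =>
      rw [eulerLam_succ]
      calc eulerLam q m * (1 - q ^ (m + 1)) ≤ eulerLam q m * 1 := by
            apply mul_le_mul_of_nonneg_left (factor_le_one hq0 m) (eulerLam_pos hq0 hq1 m).le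
        _ = eulerLam q m := mul_one _
        _ ≤ eulerLam q k := ih

/-- Key product lower bound: `λ_j ≥ λ_{j+d} (1 + Σ_{i=j}^{j+d-1} q^{i+1})`. -/
lemma eulerLam_key (hq0 : 0 < q) (hq1 : q < 1) (j : ℕ) :
    ∀ d : ℕ, eulerLam q (j + d) * (1 + ∑ i ∈ Finset.Ico j (j + d), q ^ (i + 1))
      ≤ eulerLam q j := by
  intro d
  induction d with
  | zero => simp
  | succ d ih =>
      have hsum : ∑ i ∈ Finset.Ico j (j + (d + 1)), q ^ (i + 1)
          = (∑ i ∈ Finset.Ico j (j + d), q ^ (i + 1)) + q ^ (j + d + 1) := by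
        rw [show j + (d + 1) = (j + d) + 1 from rfl]
        exact Finset.sum_Ico_succ_top (Nat.le_add_right j d) _
      rw [hsum, show j + (d + 1) = (j + d) + 1 from rfl, eulerLam_succ]
      set S := ∑ i ∈ Finset.Ico j (j + d), q ^ (i + 1) with hS
      have hS0 : 0 ≤ S := Finset.sum_nonneg fun i _ => (pow_pos hq0 _).le
      have hx0 : 0 < q ^ (j + d + 1) := pow_pos hq0 _
      have hL0 : 0 < eulerLam q (j + d) := eulerLam_pos hq0 hq1 (j + d)
      set x := q ^ (j + d + 1) with hxdef
      have h1 : (1 - x) * (1 + (S + x)) ≤ 1 + S := by nlinarith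
      calc eulerLam q (j + d) * (1 - x) * (1 + (S + x))
          = eulerLam q (j + d) * ((1 - x) * (1 + (S + x))) := by ring
        _ ≤ eulerLam q (j + d) * (1 + S) := by
            apply mul_le_mul_of_nonneg_left h1 hL0.le
        _ ≤ eulerLam q j := ih

lemma one_sub_sum_le_prod (s : Finset ℕ) (x : ℕ → ℝ) (h0 : ∀ i, 0 ≤ x i)
    (h1 : ∀ i, x i ≤ 1) : 1 - ∑ i ∈ s, x i ≤ ∏ i ∈ s, (1 - x i) := by
  induction s using Finset.cons_induction with
  | empty => simp
  | cons a s ha ih =>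
      rw [Finset.prod_cons, Finset.sum_cons]
      have hs0 : 0 ≤ ∑ i ∈ s, x i := Finset.sum_nonneg fun i _ => h0 i
      have := h0 a
      have := h1 a
      nlinarith

lemma multipliable_of_mem_unit {f : ℕ → ℝ} (h0 : ∀ i, 0 ≤ f i) (h1 : ∀ i, f i ≤ 1) :
    Multipliable f := by
  refine ⟨⨅ s : Finset ℕ, ∏ i ∈ s, f i, ?_⟩
  apply tendsto_atTop_ciInf
  · intro s t hst
    calc ∏ i ∈ t, f i = (∏ i ∈ t \ s, f i) * ∏ i ∈ s, f i := (Finset.prod_sdiff hst).symm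
      _ ≤ 1 * ∏ i ∈ s, f i := by
          apply mul_le_mul_of_nonneg_right
          · exact Finset.prod_le_one (fun i _ => h0 i) (fun i _ => h1 i)
          · exact Finset.prod_nonneg fun i _ => h0 i
      _ = ∏ i ∈ s, f i := one_mul _
  · exact ⟨0, by rintro y ⟨s, rfl⟩; exact Finset.prod_nonneg fun i _ => h0 i⟩

lemma multipliable_euler (hq0 : 0 < q) (hq1 : q < 1) :
    Multipliable (fun i : ℕ => 1 - q ^ (i + 1)) :=
  multipliable_of_mem_unit (fun i => (factor_pos hq0 hq1 i).le) (fun i => factor_le_one hq0 i)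

lemma multipliable_euler_tail (hq0 : 0 < q) (hq1 : q < 1) (m : ℕ) :
    Multipliable (fun i : ℕ => 1 - q ^ (m + 1 + i)) := by
  apply multipliable_of_mem_unit
  · intro i
    have : q ^ (m + 1 + i) < 1 := pow_lt_one₀ hq0.le hq1 (by omega)
    linarith
  · intro i
    have : 0 < q ^ (m + 1 + i) := pow_pos hq0 _
    linarith

lemma eulerKappa_eq (hq0 : 0 < q) (hq1 : q < 1) (m : ℕ) :
    eulerKappa q = eulerLam q m * eulerMu q (m + 1) := by
  have hf := multipliable_euler hq0 hq1
  have hg := multipliable_euler_tail hq0 hq1 m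
  have κtend : Filter.Tendsto (fun N => ∏ i ∈ Finset.range N, (1 - q ^ (i + 1)))
      Filter.atTop (nhds (eulerKappa q)) := by
    rw [eulerKappa]
    exact hf.hasProd.tendsto_prod_nat
  have μtend : Filter.Tendsto (fun N => ∏ i ∈ Finset.range N, (1 - q ^ (m + 1 + i)))
      Filter.atTop (nhds (eulerMu q (m + 1))) := by
    rw [eulerMu]
    exact hg.hasProd.tendsto_prod_nat
  have h1 : Filter.Tendsto (fun N => ∏ i ∈ Finset.range (m + N), (1 - q ^ (i + 1)))
      Filter.atTop (nhds (eulerKappa q)) := by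
    have h := κtend.comp (Filter.tendsto_add_atTop_nat m)
    have he : ((fun N => ∏ i ∈ Finset.range N, (1 - q ^ (i + 1)))
        ∘ (fun n => n + m)) = fun N => ∏ i ∈ Finset.range (m + N), (1 - q ^ (i + 1)) := by
      funext N
      simp [Function.comp, add_comm]
    rwa [he] at h
  have h2 : (fun N => ∏ i ∈ Finset.range (m + N), (1 - q ^ (i + 1)))
      = fun N => eulerLam q m * ∏ i ∈ Finset.range N, (1 - q ^ (m + 1 + i)) := by
    funext N
    rw [Finset.prod_range_add, eulerLam]
    congr 1
    apply Finset.prod_congr rfl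
    intro i _
    congr 2
    omega
  rw [h2] at h1
  exact tendsto_nhds_unique h1 (μtend.const_mul _)

lemma tsum_tail_geom (hq0 : 0 < q) (hq1 : q < 1) (m : ℕ) :
    ∑' i : ℕ, q ^ (m + i) = q ^ m * (1 - q)⁻¹ := by
  have : (fun i : ℕ => q ^ (m + i)) = fun i => q ^ m * q ^ i := by
    funext i; rw [pow_add]
  rw [this, tsum_mul_left, tsum_geometric_of_lt_one hq0.le hq1]

lemma eulerMu_ge (hq0 : 0 < q) (hq1 : q < 1) (m : ℕ) :
    1 - q ^ (m + 1) * (1 - q)⁻¹ ≤ eulerMu q (m + 1) := by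
  have hlt : ∀ i : ℕ, q ^ (m + 1 + i) < 1 := fun i =>
    pow_lt_one₀ hq0.le hq1 (by omega)
  have hmul : Multipliable (fun i : ℕ => 1 - q ^ (m + 1 + i)) := by
    apply multipliable_of_mem_unit
    · intro i; have := hlt i; linarith
    · intro i; have : 0 < q ^ (m + 1 + i) := pow_pos hq0 _; linarith
  have hsummable : Summable (fun i : ℕ => q ^ (m + 1 + i)) := by
    have he : (fun i : ℕ => q ^ (m + 1 + i)) = fun i => q ^ (m + 1) * q ^ i := by
      funext i; rw [pow_add]
    rw [he]
    exact (summable_geometric_of_lt_one hq0.le hq1).mul_left _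
  have hp : HasProd (fun i : ℕ => 1 - q ^ (m + 1 + i)) (eulerMu q (m + 1)) := hmul.hasProd
  refine ge_of_tendsto' hp fun s => ?_
  calc 1 - q ^ (m + 1) * (1 - q)⁻¹ = 1 - ∑' i : ℕ, q ^ (m + 1 + i) := by
        rw [tsum_tail_geom hq0 hq1]
    _ ≤ 1 - ∑ i ∈ s, q ^ (m + 1 + i) := by
        have := Summable.sum_le_tsum s (fun i _ => (pow_pos hq0 (m + 1 + i)).le) hsummable
        linarith
    _ ≤ ∏ i ∈ s, (1 - q ^ (m + 1 + i)) := by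
        apply one_sub_sum_le_prod
        · intro i; exact (pow_pos hq0 _).le
        · intro i; have := hlt i; linarith

lemma postOffset_eq (q : ℝ) (m : ℕ) :
    postOffset q m
      = (∑ j ∈ Finset.range m, eulerLam q j * eulerLam q (m - 1 - j))
        - m * eulerKappa q ^ 2 := by
  rw [postOffset]
  congr 1
  rw [← Finset.Ico_add_one_right_eq_Icc, Finset.sum_Ico_eq_sum_range]
  rw [show m + 1 - 1 = m by omega]
  apply Finset.sum_congr rfl
  intro i _
  rw [show 1 + i - 1 = i by omega, show m - (1 + i) = m - 1 - i by omega]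

end aux

/-- For all `0 < q < 1`, the offsets are strictly decreasing from `n = 2` on:
`b_n(q) > b_{n+1}(q)` for every integer `n ≥ 2`. -/
theorem postOffset_strict_anti (q : ℝ) (hq0 : 0 < q) (hq1 : q < 1) (n : ℕ) (hn : 2 ≤ n) :
    postOffset q (n + 1) < postOffset q n := by
  set L := eulerLam q with hL
  set κ := eulerKappa q with hκ
  set μ := eulerMu q (n + 1) with hμdef
  set c : ℝ := q ^ (n + 1) * (1 - q)⁻¹ with hc
  have hq1' : (0:ℝ) < 1 - q := by linarith
  have hcpos : 0 < c := by positivity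
  have hLpos : ∀ k, 0 < L k := eulerLam_pos hq0 hq1
  -- rewrite the offsets
  rw [postOffset_eq, postOffset_eq]
  -- split off the last term of the (n+1)-sum
  have hsplit : ∑ j ∈ Finset.range (n + 1), L j * L (n + 1 - 1 - j)
      = (∑ j ∈ Finset.range n, L j * L (n - j)) + L n := by
    rw [Finset.sum_range_succ]
    simp only [Nat.add_sub_cancel, Nat.sub_self]
    have : L 0 = 1 := by rw [hL, eulerLam]; simp
    rw [this, mul_one]
  rw [hsplit]
  push_cast
  -- reduce to the key inequality
  have hstep : ∀ j ∈ Finset.range n,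
      L j * L (n - 1 - j) - L j * L (n - j) = L j * (L (n - 1 - j) * q ^ (n - j)) := by
    intro j hj
    have hj' : j < n := Finset.mem_range.mp hj
    have h1 : L (n - j) = L (n - 1 - j) * (1 - q ^ (n - j)) := by
      rw [hL, show n - j = (n - 1 - j) + 1 by omega, eulerLam_succ,
        show n - 1 - j + 1 = n - j by omega]
    rw [h1]; ring
  -- main inequality: L n - κ² < ∑ (L j * (L(n-1-j) q^(n-j)))
  have hmain : L n - κ ^ 2 < ∑ j ∈ Finset.range n, L j * (L (n - 1 - j) * q ^ (n - j)) := by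
    -- lower bound each term
    have hterm : ∀ j ∈ Finset.range n,
        L n * ((L (n - 1 - j) - L (n - j)) + c * L (n - j))
          ≤ L j * (L (n - 1 - j) * q ^ (n - j)) := by
      intro j hj
      have hj' : j < n := Finset.mem_range.mp hj
      have hLnj : L (n - j) = L (n - 1 - j) * (1 - q ^ (n - j)) := by
        rw [hL, show n - j = (n - 1 - j) + 1 by omega, eulerLam_succ,
          show n - 1 - j + 1 = n - j by omega]
      -- the key bound L j ≥ L n (1 + T j)
      have hkey : L n * (1 + ∑ i ∈ Finset.Ico j n, q ^ (i + 1)) ≤ L j := by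
        have := eulerLam_key hq0 hq1 j (n - j)
        rwa [show j + (n - j) = n by omega] at this
      have hfac : 0 ≤ L (n - 1 - j) * q ^ (n - j) :=
        mul_nonneg (hLpos _).le (pow_pos hq0 _).le
      have h3 : L n * (1 + ∑ i ∈ Finset.Ico j n, q ^ (i + 1)) * (L (n - 1 - j) * q ^ (n - j))
          ≤ L j * (L (n - 1 - j) * q ^ (n - j)) :=
        mul_le_mul_of_nonneg_right hkey hfac
      refine le_trans (le_of_eq ?_) h3
      -- algebraic identity
      have hgeom : ∑ i ∈ Finset.Ico j n, q ^ (i + 1) = (q ^ (j + 1) - q ^ (n + 1)) / (1 - q) := by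
        have hqne : q ≠ 1 := ne_of_lt hq1
        have h4 : ∑ i ∈ Finset.Ico j n, q ^ (i + 1) = q * ∑ i ∈ Finset.Ico j n, q ^ i := by
          rw [Finset.mul_sum]
          apply Finset.sum_congr rfl
          intro i _
          rw [pow_succ]; ring
        have hne : q - 1 ≠ 0 := sub_ne_zero.mpr hqne
        have hne' : (1 : ℝ) - q ≠ 0 := by intro h; apply hne; linarith [h]
        rw [h4, geom_sum_Ico hqne hj'.le]
        field_simp
        ring
      rw [hgeom, hLnj, hc, div_eq_mul_inv]
      have hp1 : q ^ (j + 1) * q ^ (n - j) = q ^ (n + 1) := by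
        rw [← pow_add]; congr 1; omega
      linear_combination (-((1 - q)⁻¹ * L n * L (n - 1 - j))) * hp1
    -- sum the lower bounds
    have hsumge : ∑ j ∈ Finset.range n, L n * ((L (n - 1 - j) - L (n - j)) + c * L (n - j))
        ≤ ∑ j ∈ Finset.range n, L j * (L (n - 1 - j) * q ^ (n - j)) :=
      Finset.sum_le_sum hterm
    -- compute the left sum
    have htele : ∑ j ∈ Finset.range n, (L (n - 1 - j) - L (n - j)) = 1 - L n := by
      have h5 : ∀ j ∈ Finset.range n,
          L (n - 1 - j) - L (n - j) = (fun m => L m - L (m + 1)) (n - 1 - j) := by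
        intro j hj
        have hj' : j < n := Finset.mem_range.mp hj
        simp only
        congr 2
        omega
      rw [Finset.sum_congr rfl h5, Finset.sum_range_reflect (fun m => L m - L (m + 1)) n,
        Finset.sum_range_sub' L n]
      have : L 0 = 1 := by rw [hL, eulerLam]; simp
      rw [this]
    have hrefl : ∑ j ∈ Finset.range n, L (n - j) = ∑ j ∈ Finset.range n, L (j + 1) := by
      have h5 : ∀ j ∈ Finset.range n, L (n - j) = (fun m => L (m + 1)) (n - 1 - j) := by
        intro j hj
        have hj' : j < n := Finset.mem_range.mp hj
        simp only
        congr 1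
        omega
      rw [Finset.sum_congr rfl h5, Finset.sum_range_reflect (fun m => L (m + 1)) n]
    have hsumeq : ∑ j ∈ Finset.range n, L n * ((L (n - 1 - j) - L (n - j)) + c * L (n - j))
        = L n * ((1 - L n) + c * ∑ j ∈ Finset.range n, L (j + 1)) := by
      rw [← Finset.mul_sum]
      congr 1
      rw [Finset.sum_add_distrib, htele, ← Finset.mul_sum, hrefl]
    -- the scalar inequality
    set Ssum : ℝ := ∑ j ∈ Finset.range n, L (j + 1) with hSsum
    have hSbig : 2 * L n < Ssum := by
      have hsub : Finset.range 2 ⊆ Finset.range n := Finset.range_subset_range.mpr hn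
      have h6 : ∑ j ∈ Finset.range 2, L (j + 1) ≤ Ssum := by
        apply Finset.sum_le_sum_of_subset_of_nonneg hsub
        intro i _ _
        exact (hLpos _).le
      have h7 : ∑ j ∈ Finset.range 2, L (j + 1) = L 1 + L 2 := by
        simp [Finset.sum_range_succ]
      have h8 : L 2 ≤ L 1 * 1 := by
        rw [mul_one]; exact eulerLam_anti hq0 hq1 (by norm_num)
      have h9 : L n ≤ L 2 := eulerLam_anti hq0 hq1 hn
      have h10 : L 2 < L 1 := by
        have : L 2 = L 1 * (1 - q ^ 2) := by rw [hL, eulerLam_succ]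
        rw [this]
        have hq2 : 0 < q ^ 2 := pow_pos hq0 2
        nlinarith [hLpos 1]
      linarith
    have hκeq : κ = L n * μ := eulerKappa_eq hq0 hq1 n
    have hμge : 1 - c ≤ μ := by
      have := eulerMu_ge hq0 hq1 n
      rwa [← hc] at this
    -- conclude
    have h1μ : 1 - μ ^ 2 ≤ 2 * c := by nlinarith [sq_nonneg (1 - μ)]
    have hfin : L n - κ ^ 2 < L n * ((1 - L n) + c * Ssum) := by
      rw [hκeq]
      have h11 : L n ^ 2 * (1 - μ ^ 2) ≤ L n ^ 2 * (2 * c) :=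
        mul_le_mul_of_nonneg_left h1μ (sq_nonneg _)
      have h12 : c * L n * (2 * L n) < c * L n * Ssum := by
        exact mul_lt_mul_of_pos_left hSbig (mul_pos hcpos (hLpos n))
      nlinarith [hLpos n]
    calc L n - κ ^ 2 < L n * ((1 - L n) + c * Ssum) := hfin
      _ = ∑ j ∈ Finset.range n, L n * ((L (n - 1 - j) - L (n - j)) + c * L (n - j)) :=
          hsumeq.symm
      _ ≤ _ := hsumge
  -- finish
  have hsd : ∑ j ∈ Finset.range n, (L j * L (n - 1 - j) - L j * L (n - j))
      = ∑ j ∈ Finset.range n, L j * (L (n - 1 - j) * q ^ (n - j)) :=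
    Finset.sum_congr rfl hstep
  have hsd2 : ∑ j ∈ Finset.range n, (L j * L (n - 1 - j) - L j * L (n - j))
      = (∑ j ∈ Finset.range n, L j * L (n - 1 - j))
        - ∑ j ∈ Finset.range n, L j * L (n - j) := Finset.sum_sub_distrib _ _
  linarith [hmain, hsd ▸ hsd2]
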